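/- Let $\tau > 0$, $C > 0$, $\bar u := \max_{s\in[-\tau,0]} u(s)$, and let $u : [-\tau,\infty) \to [0,\infty)$ be continuous, differentiable on $(0,\infty)$, satisfying $u'(t) \le C(u(t) + u(t-\tau))$ for all $t > 0$. Then $u(t) \le \bar u\, e^{2Ct}$ for all $t \ge 0$. -/

import Mathlib

theorem stmt_13 (τ C : ℝ) (hτ : 0 < τ) (hC : 0 < C)
    (u : ℝ → ℝ) (hu_nonneg : ∀ t, -τ ≤ t → 0 ≤ u t)
    (hu_cont : ContinuousOn u (Set.Ici (-τ)))
    (hu_diff : DifferentiableOn ℝ u (Set.Ioi 0))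
    (hu_ineq : ∀ t, 0 < t → deriv u t ≤ C * (u t + u (t - τ))) :
    ∀ t, 0 ≤ t → u t ≤ (sSup (u '' Set.Icc (-τ) 0)) * Real.exp (2 * C * t) := by
  set M := sSup (u '' Set.Icc (-τ) 0) with hMdef
  have hτ' : -τ ≤ 0 := by linarith
  have hbdd : BddAbove (u '' Set.Icc (-τ) 0) :=
    (isCompact_Icc.image_of_continuousOn (hu_cont.mono Set.Icc_subset_Ici_self)).bddAbove
  have hinit : ∀ s, -τ ≤ s → s ≤ 0 → u s ≤ M := fun s h1 h2 =>
    le_csSup hbdd ⟨s, ⟨h1, h2⟩, rfl⟩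
  have hM0 : 0 ≤ M := le_trans (hu_nonneg 0 hτ') (hinit 0 hτ' le_rfl)
  -- derivative of the boundary function
  have hBderiv : ∀ (c : ℝ) (x : ℝ),
      HasDerivAt (fun s => c * Real.exp (2 * C * s)) (2 * C * (c * Real.exp (2 * C * x))) x := by
    intro c x
    have h1 : HasDerivAt (fun s : ℝ => 2 * C * s) (2 * C) x := by
      simpa using (hasDerivAt_id x).const_mul (2 * C)
    have h2 := (Real.hasDerivAt_exp (2 * C * x)).comp x h1
    have h3 := h2.const_mul c
    refine h3.congr_deriv ?_
    ring
  -- key step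
  have key : ∀ k : ℕ, (∀ s, 0 ≤ s → s ≤ k * τ → u s ≤ M * Real.exp (2 * C * s)) →
      ∀ t, (k : ℝ) * τ < t → t ≤ ((k : ℝ) + 1) * τ → ∀ ε, 0 < ε →
      u t ≤ (M + ε) * Real.exp (2 * C * t) := by
    intro k IH t ht1 ht2 ε hε
    set a0 : ℝ := (k : ℝ) * τ with ha0def
    have ha0 : 0 ≤ a0 := by positivity
    set B : ℝ → ℝ := fun s => (M + ε) * Real.exp (2 * C * s) with hBdef
    have hua0 : u a0 - B a0 < 0 := by
      have h1 := IH a0 ha0 le_rfl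
      have h2 : 0 < Real.exp (2 * C * a0) := Real.exp_pos _
      simp only [hBdef]
      nlinarith
    -- find a ∈ Ioc a0 t with u a ≤ B a
    have hIoi : Set.Ioi a0 ⊆ Set.Ici (-τ) := fun x hx => le_of_lt (show -τ < x by
      have : a0 < x := hx
      linarith)
    have hcontu : ContinuousWithinAt u (Set.Ioi a0) a0 :=
      ((hu_cont a0 (by simp only [Set.mem_Ici]; linarith)).mono hIoi)
    have hcont : ContinuousWithinAt (fun s => u s - B s) (Set.Ioi a0) a0 :=
      hcontu.sub ((hBderiv (M + ε) a0).continuousAt.continuousWithinAt.mono (fun x _ => trivial))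
    have hev1 : ∀ᶠ s in nhdsWithin a0 (Set.Ioi a0), u s - B s < 0 :=
      hcont.eventually_lt_const hua0
    have hev2 : ∀ᶠ s in nhdsWithin a0 (Set.Ioi a0), s ≤ t := by
      filter_upwards [eventually_nhdsWithin_of_eventually_nhds
        (Filter.Tendsto.eventually_lt_const ht1 Filter.tendsto_id)] with s hs using le_of_lt hs
    obtain ⟨a, ⟨⟨hub, hat⟩, ha0a'⟩⟩ :=
      ((hev1.and hev2).and self_mem_nhdsWithin).exists
    have ha0a : a0 < a := ha0a'
    have ha0pos : 0 < a := lt_of_le_of_lt ha0 ha0a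
    rcases eq_or_lt_of_le hat with heq | halt
    · subst heq
      have := hub
      simp only [hBdef] at this
      linarith
    -- apply the fencing theorem on [a, t]
    have main := image_le_of_deriv_right_lt_deriv_boundary (f := u) (f' := deriv u)
      (a := a) (b := t) (B := B) (B' := fun x => 2 * C * ((M + ε) * Real.exp (2 * C * x)))
      (hu_cont.mono (fun x hx => by
        simp only [Set.mem_Icc] at hx; simp only [Set.mem_Ici]; linarith [hx.1]))
      (fun x hx => by
        have hx0 : 0 < x := lt_of_lt_of_le ha0pos hx.1
        exact ((hu_diff.differentiableAt (isOpen_Ioi.mem_nhds hx0)).hasDerivAt).hasDerivWithinAt)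
      (by linarith) (fun x => hBderiv (M + ε) x)
      (fun x hx hcontact => by
        have hx0 : 0 < x := lt_of_lt_of_le ha0pos hx.1
        have hd := hu_ineq x hx0
        set E := Real.exp (2 * C * x) with hE
        have hEpos : 0 < E := Real.exp_pos _
        have hE1 : 1 ≤ E := Real.one_le_exp (by positivity)
        have hdelay : u (x - τ) ≤ M * E := by
          rcases le_or_gt (x - τ) 0 with h | h
          · have := hinit (x - τ) (by linarith) h
            nlinarith
          · have hle : x - τ ≤ (k : ℝ) * τ := by
              have := hx.2.le
              linarith
            have := IH (x - τ) h.le hle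
            have hexple : Real.exp (2 * C * (x - τ)) ≤ E := by
              apply Real.exp_le_exp.mpr
              nlinarith
            nlinarith
        have hux : u x = (M + ε) * E := hcontact
        calc deriv u x ≤ C * (u x + u (x - τ)) := hd
          _ ≤ C * ((M + ε) * E + M * E) := by nlinarith
          _ < 2 * C * ((M + ε) * E) := by nlinarith [mul_pos hC (mul_pos hε hEpos)]
      )
    exact main (Set.right_mem_Icc.mpr halt.le)
  -- main induction
  have main : ∀ k : ℕ, ∀ s, 0 ≤ s → s ≤ (k : ℝ) * τ → u s ≤ M * Real.exp (2 * C * s) := by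
    intro k
    induction k with
    | zero =>
      intro s hs0 hs
      simp only [Nat.cast_zero, zero_mul] at hs
      have : s = 0 := le_antisymm hs hs0
      subst this
      simpa using hinit 0 hτ' le_rfl
    | succ k IH =>
      intro s hs0 hs
      rcases le_or_gt s ((k : ℝ) * τ) with h | h
      · exact IH s hs0 h
      · have hkey := key k IH s h (by push_cast at hs ⊢; linarith)
        have hexp : 0 < Real.exp (2 * C * s) := Real.exp_pos _
        refine le_of_forall_pos_le_add (fun δ hδ => ?_)
        have := hkey (δ / Real.exp (2 * C * s)) (by positivity)
        calc u s ≤ (M + δ / Real.exp (2 * C * s)) * Real.exp (2 * C * s) := this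
          _ = M * Real.exp (2 * C * s) + δ := by field_simp
  intro t ht
  obtain ⟨k, hk⟩ := exists_nat_ge (t / τ)
  exact main k t ht ((div_le_iff₀ hτ).mp hk)
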